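/- If H is a nontrivial module of a graph G and F is obtained from G by contracting H to a single vertex h (h adjacent to exactly those vertices of G−H having a neighbor in H), with vertex weights w_F(h) = χ_w(H) and w_F(x) = w_G(x) for x in G−H, then the weighted chromatic number of F equals the weighted chromatic number of G. -/

import Mathlib

open scoped Classical

variable {V : Type*} [Fintype V] [DecidableEq V]

/-- A stable (independent) set. -/
def IsStable (G : SimpleGraph V) (s : Set V) : Prop :=
  ∀ a ∈ s, ∀ b ∈ s, ¬ G.Adj a b

/-- A weighted coloring, given as a multiplicity function on finsets of vertices. -/
def IsWC (G : SimpleGraph V) (w : V → ℕ) (c : Finset V → ℕ) : Prop :=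
  (∀ S : Finset V, c S ≠ 0 → IsStable G (S : Set V)) ∧
  ∀ v : V, w v ≤ ∑ S : Finset V, (if v ∈ S then c S else 0)

/-- The cost of a weighted coloring. -/
def WCcost (c : Finset V → ℕ) : ℕ := ∑ S : Finset V, c S

/-- The weighted chromatic number. -/
noncomputable def chiW (G : SimpleGraph V) (w : V → ℕ) : ℕ :=
  sInf { n : ℕ | ∃ c : Finset V → ℕ, IsWC G w c ∧ n = WCcost c }

/-- A module of a graph. -/
def IsModule (G : SimpleGraph V) (H : Finset V) : Prop :=
  ∀ v ∉ H, (∀ u ∈ H, G.Adj v u) ∨ (∀ u ∈ H, ¬ G.Adj v u)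

def NontrivialModule (G : SimpleGraph V) (H : Finset V) : Prop :=
  IsModule G H ∧ 1 < H.card ∧ H.card < Fintype.card V

/-- The quotient graph f(G,H,h): `none` plays the role of the contracted vertex h. -/
def quotientGraph (G : SimpleGraph V) (H : Finset V) :
    SimpleGraph (Option {v : V // v ∉ H}) where
  Adj x y :=
    match x, y with
    | some a, some b => G.Adj a.1 b.1
    | some a, none => ∃ u ∈ H, G.Adj a.1 u
    | none, some b => ∃ u ∈ H, G.Adj b.1 u
    | none, none => False
  symm := by
    refine ⟨?_⟩
    rintro (a | a) (b | b) hab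
    · exact hab
    · exact hab
    · exact hab
    · exact hab.symm
  loopless := by
    refine ⟨?_⟩
    rintro (a | a) hab
    · exact hab
    · exact G.loopless.irrefl _ hab

/-- Weights on the quotient graph: h gets the weighted chromatic number of G[H]. -/
noncomputable def quotientWeights (G : SimpleGraph V) (w : V → ℕ) (H : Finset V) :
    Option {v : V // v ∉ H} → ℕ :=
  fun x => match x with
  | none => chiW (G.induce (H : Set V)) (fun v => w v.1)
  | some a => w a.1

def Prime' (G : SimpleGraph V) : Prop :=
  ∀ H : Finset V, IsModule G H → H.card ≤ 1 ∨ H = Finset.univ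

def IsBuoy (G : SimpleGraph V) (S : Fin 5 → Finset V) : Prop :=
  (∀ i, (S i).Nonempty) ∧
  (∀ v : V, ∃! i, v ∈ S i) ∧
  (∀ i, ∀ a ∈ S i, ∀ b ∈ S (i + 1), G.Adj a b) ∧
  (∀ i, ∀ a ∈ S i, ∀ b ∈ S (i + 2), ¬ G.Adj a b)

/-! ### Auxiliary lemmas -/

lemma sum_pick {γ : Type*} [Fintype γ] [DecidableEq γ] (t₀ : γ) (f : γ → ℕ) :
    ∑ t : γ, (if t₀ = t then f t else 0) = f t₀ := by simp [Finset.sum_ite_eq]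

lemma sum_if_mem {γ δ : Type*} [Fintype γ] [DecidableEq γ] [Fintype δ] (g : δ → γ) (f : δ → ℕ)
    (p : γ → Prop) [DecidablePred p] :
    ∑ t : γ, (if p t then ∑ s : δ, (if g s = t then f s else 0) else 0)
      = ∑ s : δ, (if p (g s) then f s else 0) := by
  have step : ∀ t, (if p t then ∑ s : δ, (if g s = t then f s else 0) else 0)
      = ∑ s : δ, (if g s = t then (if p t then f s else 0) else 0) := by
    intro t
    by_cases hp : p t
    · rw [if_pos hp]
      exact Finset.sum_congr rfl fun s _ => by simp only [if_pos hp]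
    · rw [if_neg hp]
      symm
      apply Finset.sum_eq_zero
      intro s _
      simp only [if_neg hp, ite_self]
  rw [Finset.sum_congr rfl fun t _ => step t, Finset.sum_comm]
  exact Finset.sum_congr rfl fun s _ => sum_pick (g s) _

lemma sum_push {γ δ : Type*} [Fintype γ] [DecidableEq γ] [Fintype δ] (g : δ → γ) (f : δ → ℕ) :
    ∑ t : γ, ∑ s : δ, (if g s = t then f s else 0) = ∑ s : δ, f s := by
  rw [Finset.sum_comm]
  exact Finset.sum_congr rfl fun s _ => sum_pick (g s) _

lemma chiW_le_cost {G : SimpleGraph V} {w : V → ℕ} {c : Finset V → ℕ} (h : IsWC G w c) :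
    chiW G w ≤ WCcost c := Nat.sInf_le ⟨c, h, rfl⟩

noncomputable def singletonColoring (w : V → ℕ) : Finset V → ℕ :=
  fun S => ∑ v : V, if S = {v} then w v else 0

lemma isWC_singleton (G : SimpleGraph V) (w : V → ℕ) : IsWC G w (singletonColoring w) := by
  constructor
  · intro S hS a ha b hb
    obtain ⟨v, hv⟩ : ∃ v, S = {v} := by
      by_contra hcon
      push_neg at hcon
      exact hS (Finset.sum_eq_zero (fun v _ => if_neg (hcon v)))
    subst hv
    simp only [Finset.coe_singleton, Set.mem_singleton_iff] at ha hb
    subst ha; subst hb; exact G.loopless.irrefl _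
  · intro v
    have h1 : (if v ∈ ({v} : Finset V) then singletonColoring w {v} else 0) = w v := by
      rw [if_pos (Finset.mem_singleton_self v)]
      unfold singletonColoring
      have hpt : ∀ u : V, (if ({v}:Finset V) = {u} then w u else 0) = if v = u then w u else 0 :=
        fun u => by simp [Finset.singleton_inj]
      rw [Finset.sum_congr rfl (fun u _ => hpt u), sum_pick v w]
    calc w v = if v ∈ ({v} : Finset V) then singletonColoring w {v} else 0 := h1.symm
      _ ≤ ∑ S : Finset V, (if v ∈ S then singletonColoring w S else 0) :=
        Finset.single_le_sum (f := fun S : Finset V => if v ∈ S then singletonColoring w S else 0)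
          (fun i _ => Nat.zero_le _) (Finset.mem_univ {v})

lemma exists_opt (G : SimpleGraph V) (w : V → ℕ) :
    ∃ c, IsWC G w c ∧ WCcost c = chiW G w := by
  have h : chiW G w ∈ {n : ℕ | ∃ c : Finset V → ℕ, IsWC G w c ∧ n = WCcost c} :=
    Nat.sInf_mem ⟨_, singletonColoring w, isWC_singleton G w, rfl⟩
  obtain ⟨c, hc, hn⟩ := h
  exact ⟨c, hc, hn.symm⟩

lemma transport {α β : Type*} [Fintype α] [DecidableEq α] [Fintype β] [DecidableEq β] :
    ∀ (n : ℕ) (a : α → ℕ) (b : β → ℕ), ∑ i, a i = n → ∑ j, b j = n →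
    ∃ x : α → β → ℕ, (∀ i, ∑ j, x i j = a i) ∧ (∀ j, ∑ i, x i j = b j) := by
  intro n
  induction n with
  | zero =>
    intro a b ha hb
    refine ⟨fun _ _ => 0, fun i => ?_, fun j => ?_⟩
    · rw [Finset.sum_const, smul_zero, (Finset.sum_eq_zero_iff.mp ha i (Finset.mem_univ i))]
    · rw [Finset.sum_const, smul_zero, (Finset.sum_eq_zero_iff.mp hb j (Finset.mem_univ j))]
  | succ n ih =>
    intro a b ha hb
    obtain ⟨i₀, hi₀⟩ : ∃ i, a i ≠ 0 := by
      by_contra hcon; push_neg at hcon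
      simp [hcon] at ha
    obtain ⟨j₀, hj₀⟩ : ∃ j, b j ≠ 0 := by
      by_contra hcon; push_neg at hcon
      simp [hcon] at hb
    have hsa : ∑ i, Function.update a i₀ (a i₀ - 1) i = n := by
      rw [Finset.sum_update_of_mem (Finset.mem_univ i₀), Finset.sdiff_singleton_eq_erase]
      have h2 := Finset.add_sum_erase Finset.univ a (Finset.mem_univ i₀)
      omega
    have hsb : ∑ j, Function.update b j₀ (b j₀ - 1) j = n := by
      rw [Finset.sum_update_of_mem (Finset.mem_univ j₀), Finset.sdiff_singleton_eq_erase]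
      have h2 := Finset.add_sum_erase Finset.univ b (Finset.mem_univ j₀)
      omega
    obtain ⟨x, hx1, hx2⟩ := ih _ _ hsa hsb
    refine ⟨fun i j => x i j + (if i = i₀ ∧ j = j₀ then 1 else 0), fun i => ?_, fun j => ?_⟩
    · rw [Finset.sum_add_distrib, hx1]
      by_cases hi : i = i₀
      · subst hi
        have h1 : ∑ j, (if i = i ∧ j = j₀ then 1 else 0) = 1 := by simp
        rw [h1, Function.update_self]
        omega
      · have h1 : ∑ j, (if i = i₀ ∧ j = j₀ then 1 else 0) = 0 :=
          Finset.sum_eq_zero (fun j _ => by simp [hi])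
        rw [h1, Function.update_of_ne hi]
        omega
    · rw [Finset.sum_add_distrib, hx2]
      by_cases hj : j = j₀
      · subst hj
        have h1 : ∑ i, (if i = i₀ ∧ j = j then 1 else 0) = 1 := by simp
        rw [h1, Function.update_self]
        omega
      · have h1 : ∑ i, (if i = i₀ ∧ j = j₀ then 1 else 0) = 0 :=
          Finset.sum_eq_zero (fun i _ => by simp [hj])
        rw [h1, Function.update_of_ne hj]
        omega

/-! ### Maps between vertex sets -/

def liftT (H : Finset V) (T : Finset (Option {v : V // v ∉ H})) : Finset V :=
  T.eraseNone.image Subtype.val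

def liftD (H : Finset V) (D : Finset {u : V // u ∈ (H : Set V)}) : Finset V :=
  D.image Subtype.val

noncomputable def proj (H : Finset V) (S : Finset V) : Finset (Option {v : V // v ∉ H}) :=
  ((S.subtype (fun v => v ∉ H)).image some) ∪ (if ∃ u ∈ H, u ∈ S then {none} else ∅)

noncomputable def resH (H : Finset V) (S : Finset V) : Finset {u : V // u ∈ (H : Set V)} :=
  S.subtype (fun v => v ∈ (H : Set V))

lemma mem_liftT {H : Finset V} {T : Finset (Option {v : V // v ∉ H})} {v : V} :
    v ∈ liftT H T ↔ ∃ h : v ∉ H, some ⟨v, h⟩ ∈ T := by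
  unfold liftT
  simp only [Finset.mem_image, Finset.mem_eraseNone]
  constructor
  · rintro ⟨⟨u, hu⟩, hmem, rfl⟩
    exact ⟨hu, hmem⟩
  · rintro ⟨h, hm⟩
    exact ⟨⟨v, h⟩, hm, rfl⟩

lemma mem_liftD {H : Finset V} {D : Finset {u : V // u ∈ (H : Set V)}} {v : V} :
    v ∈ liftD H D ↔ ∃ h : v ∈ (H : Set V), (⟨v, h⟩ : {u : V // u ∈ (H : Set V)}) ∈ D := by
  unfold liftD
  simp only [Finset.mem_image]
  constructor
  · rintro ⟨⟨u, hu⟩, hmem, rfl⟩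
    exact ⟨hu, hmem⟩
  · rintro ⟨h, hm⟩
    exact ⟨⟨v, h⟩, hm, rfl⟩

lemma mem_proj_some {H : Finset V} {S : Finset V} {a : {v : V // v ∉ H}} :
    some a ∈ proj H S ↔ a.1 ∈ S := by
  unfold proj
  rw [Finset.mem_union]
  constructor
  · rintro (h | h)
    · obtain ⟨b, hb, heq⟩ := Finset.mem_image.mp h
      obtain rfl : b = a := Option.some_injective _ heq
      exact Finset.mem_subtype.mp hb
    · exfalso
      split_ifs at h <;> simp at h
  · intro h
    exact Or.inl (Finset.mem_image.mpr ⟨a, Finset.mem_subtype.mpr h, rfl⟩)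

lemma mem_proj_none {H : Finset V} {S : Finset V} :
    (none : Option {v : V // v ∉ H}) ∈ proj H S ↔ ∃ u ∈ H, u ∈ S := by
  unfold proj
  rw [Finset.mem_union]
  constructor
  · rintro (h | h)
    · obtain ⟨b, _, heq⟩ := Finset.mem_image.mp h
      exact absurd heq (by simp)
    · split_ifs at h with hex
      · exact hex
      · simp at h
  · intro h
    right
    rw [if_pos h]
    exact Finset.mem_singleton_self none

lemma mem_resH {H : Finset V} {S : Finset V} {u : {u : V // u ∈ (H : Set V)}} :
    u ∈ resH H S ↔ u.1 ∈ S := Finset.mem_subtype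

lemma qg_adj_ss {G : SimpleGraph V} {H : Finset V} {a b : {v : V // v ∉ H}} :
    (quotientGraph G H).Adj (some a) (some b) ↔ G.Adj a.1 b.1 := Iff.rfl

lemma qg_adj_sn {G : SimpleGraph V} {H : Finset V} {a : {v : V // v ∉ H}} :
    (quotientGraph G H).Adj (some a) none ↔ ∃ u ∈ H, G.Adj a.1 u := Iff.rfl

lemma induce_adj' {G : SimpleGraph V} {s : Set V} {a b : s} :
    (G.induce s).Adj a b ↔ G.Adj a.1 b.1 := Iff.rfl

/-! ### Direction ≤ -/

lemma chiW_quotient_le (G : SimpleGraph V) (w : V → ℕ) (H : Finset V) (hmod : IsModule G H) :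
    chiW (quotientGraph G H) (quotientWeights G w H) ≤ chiW G w := by
  obtain ⟨c, hc, hcost⟩ := exists_opt G w
  set c' : Finset (Option {v : V // v ∉ H}) → ℕ :=
    fun T => ∑ S : Finset V, if proj H S = T then c S else 0 with hc'def
  have hcost' : WCcost c' = WCcost c := sum_push (proj H) c
  have hkey : ∀ y : Option {v : V // v ∉ H},
      ∑ T, (if y ∈ T then c' T else 0) = ∑ S, (if y ∈ proj H S then c S else 0) :=
    fun y => sum_if_mem (proj H) c (fun t => y ∈ t)
  have hwc : IsWC (quotientGraph G H) (quotientWeights G w H) c' := by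
    constructor
    · intro T hT
      obtain ⟨S, _, hS⟩ := Finset.exists_ne_zero_of_sum_ne_zero hT
      have hST : proj H S = T := by
        by_contra hne
        rw [if_neg hne] at hS
        exact hS rfl
      rw [if_pos hST] at hS
      have hstab := hc.1 S hS
      subst hST
      rintro (_ | a) ha (_ | b) hb hadj
      · exact hadj
      · -- none, some b
        obtain ⟨u, huH, huS⟩ := mem_proj_none.mp (Finset.mem_coe.mp ha)
        have hbS : b.1 ∈ S := mem_proj_some.mp (Finset.mem_coe.mp hb)
        rcases hmod b.1 b.2 with hall | hnone
        · exact hstab b.1 hbS u huS (hall u huH)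
        · obtain ⟨u', hu'H, hadj'⟩ := hadj
          exact hnone u' hu'H hadj'
      · -- some a, none
        obtain ⟨u, huH, huS⟩ := mem_proj_none.mp (Finset.mem_coe.mp hb)
        have haS : a.1 ∈ S := mem_proj_some.mp (Finset.mem_coe.mp ha)
        rcases hmod a.1 a.2 with hall | hnone
        · exact hstab a.1 haS u huS (hall u huH)
        · obtain ⟨u', hu'H, hadj'⟩ := hadj
          exact hnone u' hu'H hadj'
      · -- some a, some b
        exact hstab a.1 (mem_proj_some.mp (Finset.mem_coe.mp ha)) b.1
          (mem_proj_some.mp (Finset.mem_coe.mp hb)) hadj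
    · rintro (_ | a)
      · -- none
        show chiW (G.induce (H : Set V)) (fun v => w v.1) ≤ _
        rw [hkey none]
        -- restriction coloring
        set cH : Finset V → ℕ := fun S => if resH H S = ∅ then 0 else c S with hcHdef
        set d₀ : Finset {u : V // u ∈ (H : Set V)} → ℕ :=
          fun D => ∑ S : Finset V, if resH H S = D then cH S else 0 with hd₀def
        have hd₀wc : IsWC (G.induce (H : Set V)) (fun v => w v.1) d₀ := by
          constructor
          · intro D hD
            obtain ⟨S, _, hS⟩ := Finset.exists_ne_zero_of_sum_ne_zero hD
            have hSD : resH H S = D := by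
              by_contra hne; rw [if_neg hne] at hS; exact hS rfl
            rw [if_pos hSD] at hS
            have hcS : c S ≠ 0 := by
              intro h0; apply hS; rw [hcHdef]; simp [h0]
            have hstab := hc.1 S hcS
            subst hSD
            intro p hp q hq hadj
            exact hstab p.1 (mem_resH.mp (Finset.mem_coe.mp hp)) q.1
              (mem_resH.mp (Finset.mem_coe.mp hq)) hadj
          · intro u
            simp only [hd₀def]
            rw [sum_if_mem (resH H) cH (fun D => u ∈ D)]
            have hpt : ∀ S : Finset V,
                (if u ∈ resH H S then cH S else 0) = (if u.1 ∈ S then c S else 0) := by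
              intro S
              by_cases hu : u.1 ∈ S
              · have hm : u ∈ resH H S := mem_resH.mpr hu
                rw [if_pos hm, if_pos hu, hcHdef]
                simp only
                rw [if_neg (Finset.ne_empty_of_mem hm)]
              · rw [if_neg (fun hm => hu (mem_resH.mp hm)), if_neg hu]
            rw [Finset.sum_congr rfl (fun S _ => hpt S)]
            exact hc.2 u.1
        refine le_trans (chiW_le_cost hd₀wc) ?_
        have h1 : WCcost d₀ = ∑ S : Finset V, cH S := sum_push (resH H) cH
        rw [h1]
        apply le_of_eq
        apply Finset.sum_congr rfl
        intro S _
        by_cases hex : ∃ u ∈ H, u ∈ S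
        · obtain ⟨u, huH, huS⟩ := hex
          have h2 : resH H S ≠ ∅ :=
            Finset.ne_empty_of_mem
              ((mem_resH (u := ⟨u, Finset.mem_coe.mpr huH⟩)).mpr huS)
          rw [hcHdef]
          simp only
          rw [if_neg h2, if_pos (mem_proj_none.mpr ⟨u, huH, huS⟩)]
        · have h2 : resH H S = ∅ := by
            rw [Finset.eq_empty_iff_forall_notMem]
            rintro ⟨u, hu⟩ hmem
            exact hex ⟨u, hu, mem_resH.mp hmem⟩
          rw [hcHdef]
          simp only
          rw [if_pos h2, if_neg (fun h => hex (mem_proj_none.mp h))]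
      · -- some a
        show w a.1 ≤ _
        rw [hkey (some a)]
        have hpt : ∀ S : Finset V,
            (if some a ∈ proj H S then c S else 0) = (if a.1 ∈ S then c S else 0) := by
          intro S
          by_cases h : a.1 ∈ S
          · rw [if_pos (mem_proj_some.mpr h), if_pos h]
          · rw [if_neg (fun hm => h (mem_proj_some.mp hm)), if_neg h]
        rw [Finset.sum_congr rfl (fun S _ => hpt S)]
        exact hc.2 a.1
  calc chiW (quotientGraph G H) (quotientWeights G w H) ≤ WCcost c' := chiW_le_cost hwc
    _ = WCcost c := hcost'
    _ = chiW G w := hcost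

/-! ### Direction ≥ -/

lemma chiW_le_quotient (G : SimpleGraph V) (w : V → ℕ) (H : Finset V) :
    chiW G w ≤ chiW (quotientGraph G H) (quotientWeights G w H) := by
  obtain ⟨c', hc', hcost'⟩ := exists_opt (quotientGraph G H) (quotientWeights G w H)
  obtain ⟨d, hd, hdcost⟩ := exists_opt (V := {u : V // u ∈ (H : Set V)})
    (G.induce (H : Set V)) (fun v => w v.1)
  set M : ℕ := ∑ T : Finset (Option {v : V // v ∉ H}), (if none ∈ T then c' T else 0) with hMdef
  have hdM : WCcost d ≤ M := by
    rw [hdcost]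
    exact hc'.2 none
  set a : Finset (Option {v : V // v ∉ H}) → ℕ := fun T => if none ∈ T then c' T else 0 with hadef
  set b : Finset {u : V // u ∈ (H : Set V)} → ℕ :=
    fun D => d D + (if D = ∅ then M - WCcost d else 0) with hbdef
  have hsb : ∑ D, b D = M := by
    rw [hbdef]
    simp only
    rw [Finset.sum_add_distrib]
    have h1 : ∑ D : Finset {u : V // u ∈ (H : Set V)}, (if D = ∅ then M - WCcost d else 0)
        = M - WCcost d := by
      rw [Finset.sum_ite_eq' Finset.univ (∅ : Finset {u : V // u ∈ (H : Set V)})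
        (fun _ => M - WCcost d)]
      simp
    rw [h1]
    have h2 : ∑ D, d D = WCcost d := rfl
    omega
  obtain ⟨x, hx1, hx2⟩ := transport M a b rfl hsb
  -- basic facts about x
  have hxT : ∀ T D, x T D ≠ 0 → none ∈ T ∧ c' T ≠ 0 := by
    intro T D hx
    have hle : x T D ≤ a T := by
      rw [← hx1 T]
      exact Finset.single_le_sum (f := fun D => x T D) (fun _ _ => Nat.zero_le _)
        (Finset.mem_univ D)
    rw [hadef] at hle
    simp only at hle
    by_cases hT : none ∈ T
    · rw [if_pos hT] at hle
      exact ⟨hT, fun h0 => hx (by omega)⟩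
    · rw [if_neg hT] at hle
      exact absurd (Nat.le_zero.mp hle) hx
  have hxD : ∀ T D, x T D ≠ 0 → D = ∅ ∨ d D ≠ 0 := by
    intro T D hx
    have hle : x T D ≤ b D := by
      rw [← hx2 D]
      exact Finset.single_le_sum (f := fun T => x T D) (fun _ _ => Nat.zero_le _)
        (Finset.mem_univ T)
    rw [hbdef] at hle
    simp only at hle
    by_cases hD : D = ∅
    · exact Or.inl hD
    · right
      rw [if_neg hD] at hle
      intro h0
      rw [h0] at hle
      exact hx (by omega)
  -- the combined coloring of G
  set aN : Finset (Option {v : V // v ∉ H}) → ℕ := fun T => if none ∈ T then 0 else c' T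
    with haNdef
  set e : Finset V → ℕ := fun S =>
    (∑ T, if liftT H T = S then aN T else 0) +
    ∑ p : Finset (Option {v : V // v ∉ H}) × Finset {u : V // u ∈ (H : Set V)},
      (if liftT H p.1 ∪ liftD H p.2 = S then x p.1 p.2 else 0) with hedef
  have hcost_e : WCcost e = WCcost c' := by
    unfold WCcost
    rw [hedef]
    simp only
    rw [Finset.sum_add_distrib, sum_push (liftT H) aN,
      sum_push (fun p : Finset (Option {v : V // v ∉ H}) × Finset {u : V // u ∈ (H : Set V)} =>
        liftT H p.1 ∪ liftD H p.2) (fun p => x p.1 p.2)]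
    rw [Fintype.sum_prod_type]
    have h1 : ∀ T, ∑ D, x T D = a T := hx1
    rw [Finset.sum_congr rfl (fun T _ => h1 T), ← Finset.sum_add_distrib]
    apply Finset.sum_congr rfl
    intro T _
    simp only [haNdef, hadef]
    by_cases hT : none ∈ T
    · simp only [if_pos hT]; omega
    · simp only [if_neg hT]; omega
  have hewc : IsWC G w e := by
    constructor
    · -- stability
      intro S hS
      rw [hedef] at hS
      simp only at hS
      have hcases : (∑ T, if liftT H T = S then aN T else 0) ≠ 0 ∨
          (∑ p : Finset (Option {v : V // v ∉ H}) × Finset {u : V // u ∈ (H : Set V)},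
            (if liftT H p.1 ∪ liftD H p.2 = S then x p.1 p.2 else 0)) ≠ 0 := by
        by_contra hcon
        push_neg at hcon
        exact hS (by omega)
      rcases hcases with h | h
      · obtain ⟨T, _, hT⟩ := Finset.exists_ne_zero_of_sum_ne_zero h
        have hTS : liftT H T = S := by
          by_contra hne; rw [if_neg hne] at hT; exact hT rfl
        rw [if_pos hTS] at hT
        have hnT : none ∉ T := by
          intro hmem
          apply hT
          rw [haNdef]
          simp [hmem]
        have hc'T : c' T ≠ 0 := by
          intro h0; apply hT; rw [haNdef]; simp [h0]
        have hstab := hc'.1 T hc'T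
        subst hTS
        intro p hp q hq hadj
        obtain ⟨hpH, hpT⟩ := mem_liftT.mp (Finset.mem_coe.mp hp)
        obtain ⟨hqH, hqT⟩ := mem_liftT.mp (Finset.mem_coe.mp hq)
        exact hstab (some ⟨p, hpH⟩) hpT (some ⟨q, hqH⟩) hqT hadj
      · obtain ⟨⟨T, D⟩, _, hTD⟩ := Finset.exists_ne_zero_of_sum_ne_zero h
        have hTDS : liftT H T ∪ liftD H D = S := by
          by_contra hne; rw [if_neg hne] at hTD; exact hTD rfl
        rw [if_pos hTDS] at hTD
        obtain ⟨hnT, hc'T⟩ := hxT T D hTD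
        have hstab := hc'.1 T hc'T
        subst hTDS
        intro p hp q hq hadj
        rcases Finset.mem_union.mp (Finset.mem_coe.mp hp) with hpT | hpD <;>
          rcases Finset.mem_union.mp (Finset.mem_coe.mp hq) with hqT | hqD
        · obtain ⟨hpH, hpT'⟩ := mem_liftT.mp hpT
          obtain ⟨hqH, hqT'⟩ := mem_liftT.mp hqT
          exact hstab (some ⟨p, hpH⟩) hpT' (some ⟨q, hqH⟩) hqT' hadj
        · -- p in T-part, q in H
          obtain ⟨hpH, hpT'⟩ := mem_liftT.mp hpT
          obtain ⟨hqH, _⟩ := mem_liftD.mp hqD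
          exact hstab (some ⟨p, hpH⟩) hpT' none hnT ⟨q, hqH, hadj⟩
        · -- p in H, q in T-part
          obtain ⟨hqH, hqT'⟩ := mem_liftT.mp hqT
          obtain ⟨hpH, _⟩ := mem_liftD.mp hpD
          exact hstab (some ⟨q, hqH⟩) hqT' none hnT ⟨p, hpH, hadj.symm⟩
        · -- both in H
          obtain ⟨hpH, hpD'⟩ := mem_liftD.mp hpD
          obtain ⟨hqH, hqD'⟩ := mem_liftD.mp hqD
          have hDne : d D ≠ 0 := by
            rcases hxD T D hTD with h0 | h0
            · rw [h0] at hpD'; exact absurd hpD' (Finset.notMem_empty _)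
            · exact h0
          exact hd.1 D hDne ⟨p, hpH⟩ hpD' ⟨q, hqH⟩ hqD' hadj
    · -- coverage
      intro v
      have hsplit : ∑ S : Finset V, (if v ∈ S then e S else 0)
          = (∑ T, if v ∈ liftT H T then aN T else 0) +
            ∑ p : Finset (Option {v : V // v ∉ H}) × Finset {u : V // u ∈ (H : Set V)},
              (if v ∈ liftT H p.1 ∪ liftD H p.2 then x p.1 p.2 else 0) := by
        have hpt : ∀ S : Finset V, (if v ∈ S then e S else 0)
            = (if v ∈ S then ∑ T, (if liftT H T = S then aN T else 0) else 0) +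
              (if v ∈ S then ∑ p : Finset (Option {v : V // v ∉ H}) ×
                  Finset {u : V // u ∈ (H : Set V)},
                (if liftT H p.1 ∪ liftD H p.2 = S then x p.1 p.2 else 0) else 0) := by
          intro S
          rw [hedef]
          simp only
          by_cases h : v ∈ S
          · rw [if_pos h, if_pos h, if_pos h]
          · rw [if_neg h, if_neg h, if_neg h]
        rw [Finset.sum_congr rfl (fun S _ => hpt S), Finset.sum_add_distrib,
          sum_if_mem (liftT H) aN (fun S => v ∈ S),
          sum_if_mem (fun p : Finset (Option {v : V // v ∉ H}) ×
              Finset {u : V // u ∈ (H : Set V)} => liftT H p.1 ∪ liftD H p.2)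
            (fun p => x p.1 p.2) (fun S => v ∈ S)]
      rw [hsplit]
      by_cases hv : v ∈ H
      · -- v ∈ H
        have h1 : ∀ T, (if v ∈ liftT H T then aN T else 0) = 0 := by
          intro T
          rw [if_neg]
          intro hmem
          exact (mem_liftT.mp hmem).1 hv
        rw [Finset.sum_congr rfl (fun T _ => h1 T), Finset.sum_const, smul_zero, zero_add]
        have hvH : v ∈ (H : Set V) := Finset.mem_coe.mpr hv
        have h2 : ∀ p : Finset (Option {v : V // v ∉ H}) × Finset {u : V // u ∈ (H : Set V)},
            (if v ∈ liftT H p.1 ∪ liftD H p.2 then x p.1 p.2 else 0)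
              = (if (⟨v, hvH⟩ : {u : V // u ∈ (H : Set V)}) ∈ p.2 then x p.1 p.2 else 0) := by
          intro p
          by_cases h : (⟨v, hvH⟩ : {u : V // u ∈ (H : Set V)}) ∈ p.2
          · rw [if_pos h, if_pos (Finset.mem_union_right _ (mem_liftD.mpr ⟨hvH, h⟩))]
          · rw [if_neg h, if_neg]
            intro hmem
            rcases Finset.mem_union.mp hmem with hm | hm
            · exact (mem_liftT.mp hm).1 hv
            · obtain ⟨h', hm'⟩ := mem_liftD.mp hm
              exact h hm'
        rw [Finset.sum_congr rfl (fun p _ => h2 p), Fintype.sum_prod_type_right]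
        have h3 : ∀ D : Finset {u : V // u ∈ (H : Set V)},
            (∑ T, if (⟨v, hvH⟩ : {u : V // u ∈ (H : Set V)}) ∈ D then x T D else 0)
              = (if (⟨v, hvH⟩ : {u : V // u ∈ (H : Set V)}) ∈ D then b D else 0) := by
          intro D
          by_cases h : (⟨v, hvH⟩ : {u : V // u ∈ (H : Set V)}) ∈ D
          · simp only [if_pos h]
            exact hx2 D
          · simp only [if_neg h]
            simp
        rw [Finset.sum_congr rfl (fun D _ => h3 D)]
        have h4 : ∑ D, (if (⟨v, hvH⟩ : {u : V // u ∈ (H : Set V)}) ∈ D then d D else 0)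
            ≤ ∑ D, (if (⟨v, hvH⟩ : {u : V // u ∈ (H : Set V)}) ∈ D then b D else 0) := by
          apply Finset.sum_le_sum
          intro D _
          by_cases h : (⟨v, hvH⟩ : {u : V // u ∈ (H : Set V)}) ∈ D
          · rw [if_pos h, if_pos h, hbdef]; exact Nat.le_add_right _ _
          · rw [if_neg h, if_neg h]
        exact le_trans (hd.2 ⟨v, hvH⟩) h4
      · -- v ∉ H
        have h1 : ∀ T, (if v ∈ liftT H T then aN T else 0)
            = (if some ⟨v, hv⟩ ∈ T then aN T else 0) := by
          intro T
          by_cases h : some (⟨v, hv⟩ : {v : V // v ∉ H}) ∈ T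
          · rw [if_pos h, if_pos (mem_liftT.mpr ⟨hv, h⟩)]
          · rw [if_neg h, if_neg]
            intro hmem
            obtain ⟨h', hm⟩ := mem_liftT.mp hmem
            exact h hm
        have h2 : ∀ p : Finset (Option {v : V // v ∉ H}) × Finset {u : V // u ∈ (H : Set V)},
            (if v ∈ liftT H p.1 ∪ liftD H p.2 then x p.1 p.2 else 0)
              = (if some ⟨v, hv⟩ ∈ p.1 then x p.1 p.2 else 0) := by
          intro p
          by_cases h : some (⟨v, hv⟩ : {v : V // v ∉ H}) ∈ p.1
          · rw [if_pos h, if_pos (Finset.mem_union_left _ (mem_liftT.mpr ⟨hv, h⟩))]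
          · rw [if_neg h, if_neg]
            intro hmem
            rcases Finset.mem_union.mp hmem with hm | hm
            · exact h (mem_liftT.mp hm).2
            · exact hv ((mem_liftD.mp hm).1)
        rw [Finset.sum_congr rfl (fun T _ => h1 T), Finset.sum_congr rfl (fun p _ => h2 p),
          Fintype.sum_prod_type]
        have h3 : ∀ T, (∑ D, if some (⟨v, hv⟩ : {v : V // v ∉ H}) ∈ T then x T D else 0)
            = (if some ⟨v, hv⟩ ∈ T then a T else 0) := by
          intro T
          by_cases h : some (⟨v, hv⟩ : {v : V // v ∉ H}) ∈ T
          · simp only [if_pos h]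
            exact hx1 T
          · simp only [if_neg h]
            simp
        rw [Finset.sum_congr rfl (fun T _ => h3 T), ← Finset.sum_add_distrib]
        have h4 : ∀ T, (if some (⟨v, hv⟩ : {v : V // v ∉ H}) ∈ T then aN T else 0) +
            (if some ⟨v, hv⟩ ∈ T then a T else 0)
              = (if some ⟨v, hv⟩ ∈ T then c' T else 0) := by
          intro T
          by_cases h : some (⟨v, hv⟩ : {v : V // v ∉ H}) ∈ T
          · rw [if_pos h, if_pos h, if_pos h]
            simp only [haNdef, hadef]
            by_cases hT : none ∈ T
            · simp only [if_pos hT]; omega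
            · simp only [if_neg hT]; omega
          · rw [if_neg h, if_neg h, if_neg h]
        rw [Finset.sum_congr rfl (fun T _ => h4 T)]
        exact hc'.2 (some ⟨v, hv⟩)
  calc chiW G w ≤ WCcost e := chiW_le_cost hewc
    _ = WCcost c' := hcost_e
    _ = chiW (quotientGraph G H) (quotientWeights G w H) := hcost'

/-- contracting a nontrivial module (with weight χ_w(G[H]) on the new
vertex) preserves the weighted chromatic number. -/
theorem quotient_chiW_eq (G : SimpleGraph V) (w : V → ℕ) (H : Finset V)
    (hH : NontrivialModule G H) :
    chiW (quotientGraph G H) (quotientWeights G w H) = chiW G w := by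
  exact le_antisymm (chiW_quotient_le G w H hH.1) (chiW_le_quotient G w H)
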